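/- For every n ≥ 3, the generalized Petersen graph GP(n,2) has no balanced zero-neighborhood labeling. -/

import Mathlib

open Finset

noncomputable def vertexWeight {V Γ : Type*} [Fintype V] [AddCommMonoid Γ]
    (G : SimpleGraph V) (ℓ : V → Γ) (x : V) : Γ := by
  classical exact ∑ y ∈ Finset.univ.filter (fun v => G.Adj x v), ℓ y

/-- `ℓ` is a distance magic labeling of `G` with magic constant `μ`. -/
def IsDistMagic {V Γ : Type*} [Fintype V] [AddCommMonoid Γ]
    (G : SimpleGraph V) (ℓ : V → Γ) (μ : Γ) : Prop :=
  Function.Bijective ℓ ∧ ∀ x, vertexWeight G ℓ x = μ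

noncomputable def degOf {V : Type*} [Fintype V] (G : SimpleGraph V) (v : V) : ℕ := by
  classical exact (Finset.univ.filter (fun u => G.Adj v u)).card

/-- The generalized Petersen graph `GP(n,k)` on vertex set `ZMod n ⊕ ZMod n`:
`Sum.inl i` is the outer vertex `x_i`, `Sum.inr i` the inner vertex `y_i`. -/
def GP (n k : ℕ) : SimpleGraph (ZMod n ⊕ ZMod n) :=
  SimpleGraph.fromRel (fun a b =>
    match a, b with
    | Sum.inl i, Sum.inl j => j = i + 1
    | Sum.inr i, Sum.inr j => j = i + (k : ZMod n)
    | Sum.inl i, Sum.inr j => i = j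
    | _, _ => False)

/-- A balanced zero-neighborhood labeling of a graph `G` on `2n` vertices. -/
noncomputable def IsBZN {V : Type*} [Fintype V] (G : SimpleGraph V) (n : ℕ)
    (ℓ : V → ZMod 2) : Prop := by
  classical exact
    (Finset.univ.filter (fun v => ℓ v = 0)).card = n ∧
    (Finset.univ.filter (fun v => ℓ v = 1)).card = n ∧
    ∀ v, vertexWeight G ℓ v = 0

lemma filter_inl (n : ℕ) [NeZero n] (h1 : (1 : ZMod n) ≠ 0) (h2 : (2 : ZMod n) ≠ 0)
    (i : ZMod n) [DecidablePred fun v => (GP n 2).Adj (Sum.inl i) v] :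
    (Finset.univ.filter (fun v => (GP n 2).Adj (Sum.inl i) v)) =
      {Sum.inl (i+1), Sum.inl (i-1), Sum.inr i} := by
  ext v
  cases v with
  | inl j =>
    simp only [Finset.mem_filter, Finset.mem_univ, true_and]
    simp only [GP, SimpleGraph.fromRel_adj, Finset.mem_filter, Finset.mem_univ, true_and,
      Finset.mem_insert, Finset.mem_singleton, Sum.inl.injEq, ne_eq, reduceCtorEq, or_false]
    constructor
    · rintro ⟨hne, h | h⟩
      · left; exact h
      · right; rw [h]; ring
    · rintro (h | h)
      · subst h
        exact ⟨fun hc => h1 (by linear_combination -hc), Or.inl rfl⟩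
      · subst h
        exact ⟨fun hc => h1 (by linear_combination hc), Or.inr (by ring)⟩
  | inr j =>
    simp only [Finset.mem_filter, Finset.mem_univ, true_and]
    simp only [GP, SimpleGraph.fromRel_adj, Finset.mem_filter, Finset.mem_univ, true_and,
      Finset.mem_insert, Finset.mem_singleton, Sum.inr.injEq, ne_eq, reduceCtorEq,
      not_false_iff, true_and, false_or, or_false]
    exact eq_comm

lemma weight_inl (n : ℕ) [NeZero n] (h1 : (1 : ZMod n) ≠ 0) (h2 : (2 : ZMod n) ≠ 0)
    (ℓ : ZMod n ⊕ ZMod n → ZMod 2) (i : ZMod n) :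
    vertexWeight (GP n 2) ℓ (Sum.inl i) =
      ℓ (Sum.inl (i+1)) + ℓ (Sum.inl (i-1)) + ℓ (Sum.inr i) := by
  classical
  unfold vertexWeight
  rw [Finset.filter_congr_decidable]
  rw [filter_inl n h1 h2 i]
  rw [Finset.sum_insert (by
    simp only [Finset.mem_insert, Finset.mem_singleton, Sum.inl.injEq, reduceCtorEq, or_false]
    intro hc
    exact h2 (by linear_combination hc)), Finset.sum_insert (by simp), Finset.sum_singleton, add_assoc]

lemma filter_inr (n : ℕ) [NeZero n] (h2 : (2 : ZMod n) ≠ 0) (h4 : (4 : ZMod n) ≠ 0)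
    (i : ZMod n) [DecidablePred fun v => (GP n 2).Adj (Sum.inr i) v] :
    (Finset.univ.filter (fun v => (GP n 2).Adj (Sum.inr i) v)) =
      {Sum.inr (i+2), Sum.inr (i-2), Sum.inl i} := by
  ext v
  cases v with
  | inl j =>
    simp only [Finset.mem_filter, Finset.mem_univ, true_and]
    simp only [GP, SimpleGraph.fromRel_adj, Finset.mem_filter, Finset.mem_univ, true_and,
      Finset.mem_insert, Finset.mem_singleton, Sum.inl.injEq, ne_eq, reduceCtorEq,
      not_false_iff, true_and, false_or, or_false]
  | inr j =>
    simp only [Finset.mem_filter, Finset.mem_univ, true_and]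
    simp only [GP, SimpleGraph.fromRel_adj, Finset.mem_filter, Finset.mem_univ, true_and,
      Finset.mem_insert, Finset.mem_singleton, Sum.inr.injEq, ne_eq, reduceCtorEq, or_false,
      Nat.cast_ofNat]
    constructor
    · rintro ⟨hne, h | h⟩
      · left; exact h
      · right; rw [h]; ring
    · rintro (h | h)
      · subst h
        exact ⟨fun hc => h2 (by linear_combination -hc), Or.inl rfl⟩
      · subst h
        exact ⟨fun hc => h2 (by linear_combination hc), Or.inr (by ring)⟩

lemma weight_inr (n : ℕ) [NeZero n] (h2 : (2 : ZMod n) ≠ 0) (h4 : (4 : ZMod n) ≠ 0)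
    (ℓ : ZMod n ⊕ ZMod n → ZMod 2) (i : ZMod n) :
    vertexWeight (GP n 2) ℓ (Sum.inr i) =
      ℓ (Sum.inr (i+2)) + ℓ (Sum.inr (i-2)) + ℓ (Sum.inl i) := by
  classical
  unfold vertexWeight
  rw [Finset.filter_congr_decidable]
  rw [filter_inr n h2 h4 i]
  rw [Finset.sum_insert (by
    simp only [Finset.mem_insert, Finset.mem_singleton, Sum.inr.injEq, reduceCtorEq, or_false]
    intro hc
    exact h4 (by linear_combination hc)), Finset.sum_insert (by simp), Finset.sum_singleton,
    add_assoc]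

lemma filter_inr4 (i : ZMod 4)
    [DecidablePred fun v => (GP 4 2).Adj (Sum.inr i) v] :
    (Finset.univ.filter (fun v => (GP 4 2).Adj (Sum.inr i) v)) =
      {Sum.inr (i+2), Sum.inl i} := by
  ext v
  cases v with
  | inl j =>
    simp only [Finset.mem_filter, Finset.mem_univ, true_and]
    simp only [GP, SimpleGraph.fromRel_adj, Finset.mem_filter, Finset.mem_univ, true_and,
      Finset.mem_insert, Finset.mem_singleton, Sum.inl.injEq, ne_eq, reduceCtorEq,
      not_false_iff, true_and, false_or, or_false]
  | inr j =>
    simp only [Finset.mem_filter, Finset.mem_univ, true_and]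
    simp only [GP, SimpleGraph.fromRel_adj, Finset.mem_filter, Finset.mem_univ, true_and,
      Finset.mem_insert, Finset.mem_singleton, Sum.inr.injEq, ne_eq, reduceCtorEq, or_false,
      Nat.cast_ofNat]
    constructor
    · rintro ⟨hne, h | h⟩
      · exact h
      · rw [h]; ring_nf; rw [show (4 : ZMod 4) = 0 by decide]; ring
    · rintro h
      subst h
      exact ⟨(by decide : ∀ x : ZMod 4, x ≠ x + 2) i, Or.inl rfl⟩

lemma weight_inr4 (ℓ : ZMod 4 ⊕ ZMod 4 → ZMod 2) (i : ZMod 4) :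
    vertexWeight (GP 4 2) ℓ (Sum.inr i) = ℓ (Sum.inr (i+2)) + ℓ (Sum.inl i) := by
  classical
  unfold vertexWeight
  rw [Finset.filter_congr_decidable]
  rw [filter_inr4 i]
  rw [Finset.sum_insert (by simp), Finset.sum_singleton]

lemma per_mul {n d : ℕ} {M : Type*} (f : ZMod n → M)
    (hf : ∀ i, f (i + (d : ZMod n)) = f i) :
    ∀ (t : ℕ) (i : ZMod n), f (i + ((d * t : ℕ) : ZMod n)) = f i := by
  intro t
  induction t with
  | zero => simp
  | succ t ih =>
    intro i
    have h1 : ((d * (t+1) : ℕ) : ZMod n) = ((d * t : ℕ) : ZMod n) + (d : ZMod n) := by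
      push_cast; ring
    rw [h1, ← add_assoc, hf, ih]

lemma sum_zmod_eq_range {n : ℕ} [NeZero n] {M : Type*} [AddCommMonoid M] (f : ZMod n → M) :
    ∑ i : ZMod n, f i = ∑ k ∈ Finset.range n, f (k : ZMod n) := by
  refine Finset.sum_nbij' (fun (i : ZMod n) => i.val) (fun (k : ℕ) => (k : ZMod n))
    ?_ ?_ ?_ ?_ ?_
  · intro i _; exact Finset.mem_range.mpr (ZMod.val_lt i)
  · intro k _; exact Finset.mem_univ _
  · intro i _; exact ZMod.natCast_rightInverse i
  · intro k hk; exact ZMod.val_cast_of_lt (Finset.mem_range.mp hk)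
  · intro i _; rw [ZMod.natCast_rightInverse i]

lemma sum_periodic {n : ℕ} [NeZero n] (d : ℕ) (hd : d ∣ n) (f : ZMod n → ℕ)
    (hf : ∀ i, f (i + (d : ZMod n)) = f i) :
    ∑ i : ZMod n, f i = (n / d) * ∑ r ∈ Finset.range d, f ((r : ℕ) : ZMod n) := by
  obtain ⟨m, hm⟩ := hd
  have hd0 : d ≠ 0 := by rintro rfl; exact (NeZero.ne n) (by simpa using hm)
  have hnd : n / d = m := by rw [hm, Nat.mul_div_cancel_left _ (Nat.pos_of_ne_zero hd0)]
  rw [sum_zmod_eq_range, hnd]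
  have key : ∀ M : ℕ, ∑ k ∈ Finset.range (d * M), f (k : ZMod n)
      = M * ∑ r ∈ Finset.range d, f ((r : ℕ) : ZMod n) := by
    intro M
    induction M with
    | zero => simp
    | succ M ih =>
      have : d * (M + 1) = d * M + d := by ring
      rw [this, Finset.sum_range_add, ih]
      have h2 : ∀ x ∈ Finset.range d, f ((d * M + x : ℕ) : ZMod n) = f ((x : ℕ) : ZMod n) := by
        intro x _
        have : ((d * M + x : ℕ) : ZMod n) = ((x : ℕ) : ZMod n) + ((d * M : ℕ) : ZMod n) := by
          push_cast; ring
        rw [this, per_mul f hf M]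
      rw [Finset.sum_congr rfl h2]
      ring
  rw [show Finset.range n = Finset.range (d * m) from by rw [← hm]]
  exact key m

lemma shift_window {n d : ℕ} {M : Type*} [AddCommGroup M] (g : ZMod n → M)
    (hg : ∀ i, g (i + (d : ZMod n)) = g i) (c : ZMod n) :
    ∑ r ∈ Finset.range d, g ((r : ZMod n) + (c + 1)) = ∑ r ∈ Finset.range d, g ((r : ZMod n) + c) := by
  cases d with
  | zero => simp
  | succ e =>
    rw [Finset.sum_range_succ, Finset.sum_range_succ']
    have h1 : ∀ r : ℕ, g (((r + 1 : ℕ) : ZMod n) + c) = g ((r : ZMod n) + (c + 1)) := by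
      intro r; congr 1; push_cast; ring
    rw [Finset.sum_congr rfl (fun r _ => h1 r)]
    congr 1
    have h2 : ((e : ZMod n)) + (c + 1) = (0 : ℕ) + c + ((e+1 : ℕ) : ZMod n) := by
      push_cast; ring
    rw [h2, hg]


lemma rec15 {n : ℕ} (a : ZMod n → ZMod 2)
    (h : ∀ i : ZMod n, a (i + 6) = a (i + 4) + a (i + 3) + a (i + 2) + a i)
    (i : ZMod n) : a (i + 15) = a i := by
  have e0 := h i
  have e1 := h (i + 1)
  have e2 := h (i + 2)
  have e3 := h (i + 3)
  have e4 := h (i + 4)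
  have e5 := h (i + 5)
  have e6 := h (i + 6)
  have e7 := h (i + 7)
  have e8 := h (i + 8)
  have e9 := h (i + 9)
  simp only [add_assoc] at e1 e2 e3 e4 e5 e6 e7 e8 e9
  norm_num at e1 e2 e3 e4 e5 e6 e7 e8 e9
  have c8 : a (i + 8) = a (i + 5) + a (i + 3) + a i := by
    rw [e2, e0]
    generalize a i = x0
    generalize a (i + 2) = x2
    generalize a (i + 3) = x3
    generalize a (i + 4) = x4
    generalize a (i + 5) = x5
    revert x0 x2 x3 x4 x5
    decide
  have c9 : a (i + 9) = a (i + 3) + a (i + 2) + a (i + 1) + a i := by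
    rw [e3, e1, e0]
    generalize a i = x0
    generalize a (i + 1) = x1
    generalize a (i + 2) = x2
    generalize a (i + 3) = x3
    generalize a (i + 4) = x4
    generalize a (i + 5) = x5
    revert x0 x1 x2 x3 x4 x5
    decide
  have c10 : a (i + 10) = a (i + 4) + a (i + 3) + a (i + 2) + a (i + 1) := by
    rw [e4, c8, e1, e0]
    generalize a i = x0
    generalize a (i + 1) = x1
    generalize a (i + 2) = x2
    generalize a (i + 3) = x3
    generalize a (i + 4) = x4
    generalize a (i + 5) = x5
    revert x0 x1 x2 x3 x4 x5
    decide
  have c11 : a (i + 11) = a (i + 5) + a (i + 4) + a (i + 3) + a (i + 2) := by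
    rw [e5, c9, c8, e1]
    generalize a i = x0
    generalize a (i + 1) = x1
    generalize a (i + 2) = x2
    generalize a (i + 3) = x3
    generalize a (i + 4) = x4
    generalize a (i + 5) = x5
    revert x0 x1 x2 x3 x4 x5
    decide
  have c12 : a (i + 12) = a (i + 5) + a (i + 2) + a i := by
    rw [e6, c10, c9, c8, e0]
    generalize a i = x0
    generalize a (i + 1) = x1
    generalize a (i + 2) = x2
    generalize a (i + 3) = x3
    generalize a (i + 4) = x4
    generalize a (i + 5) = x5
    revert x0 x1 x2 x3 x4 x5
    decide
  have c13 : a (i + 13) = a (i + 4) + a (i + 2) + a (i + 1) + a i := by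
    rw [e7, c11, c10, c9, e1]
    generalize a i = x0
    generalize a (i + 1) = x1
    generalize a (i + 2) = x2
    generalize a (i + 3) = x3
    generalize a (i + 4) = x4
    generalize a (i + 5) = x5
    revert x0 x1 x2 x3 x4 x5
    decide
  have c14 : a (i + 14) = a (i + 5) + a (i + 3) + a (i + 2) + a (i + 1) := by
    rw [e8, c12, c11, c10, c8]
    generalize a i = x0
    generalize a (i + 1) = x1
    generalize a (i + 2) = x2
    generalize a (i + 3) = x3
    generalize a (i + 4) = x4
    generalize a (i + 5) = x5
    revert x0 x1 x2 x3 x4 x5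
    decide
  rw [e9, c13, c12, c11, c9]
  generalize a i = x0
  generalize a (i + 1) = x1
  generalize a (i + 2) = x2
  generalize a (i + 3) = x3
  generalize a (i + 4) = x4
  generalize a (i + 5) = x5
  revert x0 x1 x2 x3 x4 x5
  decide

lemma helper5 : ∀ x3 x6 x4 x2 x0 : ZMod 2,
    x3 = x6 + x4 + (x2 + x0) → x6 = x4 + x3 + x2 + x0 := by decide

lemma addself : ∀ x : ZMod 2, x + x = 0 := by decide

lemma general_case (n : ℕ) [NeZero n] (hn : 3 ≤ n) (hn4 : n ≠ 4)
    (a b : ZMod n → ZMod 2)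
    (hb : ∀ i, b i = a (i + 1) + a (i - 1))
    (ha : ∀ i, a i = b (i + 2) + b (i - 2))
    (hcount : (∑ i : ZMod n,
      ((if a i = 1 then 1 else 0) + (if b i = 1 then 1 else 0))) = n) : False := by
  -- the degree-6 recurrence
  have hrec6 : ∀ i : ZMod n, a (i + 6) = a (i + 4) + a (i + 3) + a (i + 2) + a i := by
    intro i
    have h3 := ha (i + 3)
    rw [show i + 3 + 2 = i + 5 by ring, show i + 3 - 2 = i + 1 by ring,
      hb (i + 5), hb (i + 1),
      show i + 5 + 1 = i + 6 by ring, show i + 5 - 1 = i + 4 by ring,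
      show i + 1 + 1 = i + 2 by ring, show i + 1 - 1 = i by ring] at h3
    exact helper5 _ _ _ _ _ h3
  have hp15 : ∀ i : ZMod n, a (i + ((15 : ℕ) : ZMod n)) = a i := by
    intro i
    have := rec15 a hrec6 i
    rwa [show ((15 : ℕ) : ZMod n) = (15 : ZMod n) by push_cast; ring]
  -- period d = gcd n 15
  set d : ℕ := Nat.gcd n 15 with hd_def
  have hdn : d ∣ n := Nat.gcd_dvd_left n 15
  have hd15 : d ∣ 15 := Nat.gcd_dvd_right n 15
  have hpa : ∀ i : ZMod n, a (i + (d : ZMod n)) = a i := by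
    have hbez := Nat.gcd_eq_gcd_ab n 15
    set B : ℤ := Nat.gcdB n 15 with hB
    set t : ℕ := (B % (n : ℤ)).toNat with ht
    have hn0 : (0:ℤ) < (n:ℤ) := by exact_mod_cast Nat.pos_of_ne_zero (NeZero.ne n)
    have htB : ((B : ℤ) : ZMod n) = ((t : ℕ) : ZMod n) := by
      have h1 : ((t:ℕ):ℤ) = B % (n:ℤ) := by
        rw [ht]; exact Int.toNat_of_nonneg (Int.emod_nonneg _ (ne_of_gt hn0))
      have h2 : ((B % (n:ℤ) : ℤ) : ZMod n) = ((B : ℤ) : ZMod n) := by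
        conv_rhs => rw [← Int.emod_add_mul_ediv B (n : ℤ)]
        push_cast
        rw [ZMod.natCast_self]
        ring
      calc ((B:ℤ):ZMod n) = ((B % (n:ℤ) : ℤ) : ZMod n) := h2.symm
        _ = (((t:ℕ):ℤ) : ZMod n) := by rw [h1]
        _ = ((t:ℕ) : ZMod n) := by push_cast; ring
    have hdt : ((d : ℕ) : ZMod n) = ((15 * t : ℕ) : ZMod n) := by
      have h3 : ((d : ℤ) : ZMod n) = ((n : ℤ) * Nat.gcdA n 15 + (15:ℤ) * B : ℤ) := by
        exact_mod_cast congrArg (fun z : ℤ => ((z : ZMod n))) hbez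
      push_cast at h3 ⊢
      rw [ZMod.natCast_self] at h3
      rw [h3, htB]
      push_cast
      ring
    intro i
    rw [hdt, show (15 * t : ℕ) = 15 * t from rfl]
    exact per_mul a hp15 t i
  have hpb : ∀ i : ZMod n, b (i + (d : ZMod n)) = b i := by
    intro i
    rw [hb, hb, show i + (d:ZMod n) + 1 = (i+1) + (d:ZMod n) by ring,
      show i + (d:ZMod n) - 1 = (i-1) + (d:ZMod n) by ring, hpa, hpa]
  -- counting
  set F : ZMod n → ℕ := fun i => (if a i = 1 then 1 else 0) + (if b i = 1 then 1 else 0)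
    with hF_def
  have hFper : ∀ i, F (i + (d : ZMod n)) = F i := by
    intro i; simp only [hF_def, hpa i, hpb i]
  have hWn : n = (n / d) * ∑ r ∈ Finset.range d, F ((r : ℕ) : ZMod n) := by
    rw [← sum_periodic d hdn F hFper, hcount]
  set W : ℕ := ∑ r ∈ Finset.range d, F ((r : ℕ) : ZMod n) with hW_def
  have hd0 : d ≠ 0 := Nat.gcd_ne_zero_left (NeZero.ne n)
  have hnd0 : n / d ≠ 0 := by
    intro hc
    have := Nat.div_mul_cancel hdn
    rw [hc, zero_mul] at this
    exact NeZero.ne n this.symm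
  have hWd : W = d := by
    refine Nat.eq_of_mul_eq_mul_left (Nat.pos_of_ne_zero hnd0) ?_
    rw [← hWn, Nat.div_mul_cancel hdn]
  -- parity of W
  have hSb : ∑ r ∈ Finset.range d, b ((r : ℕ) : ZMod n) = 0 := by
    have e1 : ∑ r ∈ Finset.range d, b ((r : ℕ) : ZMod n)
        = (∑ r ∈ Finset.range d, a (((r:ℕ) : ZMod n) + 1))
          + ∑ r ∈ Finset.range d, a (((r:ℕ) : ZMod n) + (-1)) := by
      rw [← Finset.sum_add_distrib]
      refine Finset.sum_congr rfl fun r _ => ?_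
      rw [hb]; rw [sub_eq_add_neg]
    have s1 : ∑ r ∈ Finset.range d, a (((r:ℕ) : ZMod n) + 1)
        = ∑ r ∈ Finset.range d, a (((r:ℕ) : ZMod n) + 0) := by
      have := shift_window a hpa (0 : ZMod n)
      simpa using this
    have s2 : ∑ r ∈ Finset.range d, a (((r:ℕ) : ZMod n) + 0)
        = ∑ r ∈ Finset.range d, a (((r:ℕ) : ZMod n) + (-1)) := by
      have := shift_window a hpa (-1 : ZMod n)
      simpa using this
    rw [e1, s1, ← s2]
    exact addself _
  have hSa : ∑ r ∈ Finset.range d, a ((r : ℕ) : ZMod n) = 0 := by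
    have e1 : ∑ r ∈ Finset.range d, a ((r : ℕ) : ZMod n)
        = (∑ r ∈ Finset.range d, b (((r:ℕ) : ZMod n) + 2))
          + ∑ r ∈ Finset.range d, b (((r:ℕ) : ZMod n) + (-2)) := by
      rw [← Finset.sum_add_distrib]
      refine Finset.sum_congr rfl fun r _ => ?_
      rw [ha]; rw [sub_eq_add_neg]
    have s1 : ∑ r ∈ Finset.range d, b (((r:ℕ) : ZMod n) + 2)
        = ∑ r ∈ Finset.range d, b (((r:ℕ) : ZMod n) + 1) := by
      have := shift_window b hpb (1 : ZMod n)
      simpa [show (1:ZMod n)+1 = 2 by ring] using this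
    have s2 : ∑ r ∈ Finset.range d, b (((r:ℕ) : ZMod n) + 1)
        = ∑ r ∈ Finset.range d, b (((r:ℕ) : ZMod n) + 0) := by
      have := shift_window b hpb (0 : ZMod n)
      simpa using this
    have s3 : ∑ r ∈ Finset.range d, b (((r:ℕ) : ZMod n) + (-1))
        = ∑ r ∈ Finset.range d, b (((r:ℕ) : ZMod n) + (-2)) := by
      have := shift_window b hpb (-2 : ZMod n)
      simpa [show (-2:ZMod n)+1 = -1 by ring] using this
    have s4 : ∑ r ∈ Finset.range d, b (((r:ℕ) : ZMod n) + 0)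
        = ∑ r ∈ Finset.range d, b (((r:ℕ) : ZMod n) + (-1)) := by
      have := shift_window b hpb (-1 : ZMod n)
      simpa using this
    rw [e1, s1, s2, ← s3, ← s4]
    exact addself _
  have hterm : ∀ x : ZMod n, ((F x : ℕ) : ZMod 2) = a x + b x := by
    intro x
    have hh2 : ∀ y : ZMod 2, (if y = 1 then (1:ZMod 2) else 0) = y := by decide
    simp only [hF_def]
    push_cast [apply_ite (Nat.cast : ℕ → ZMod 2)]
    rw [hh2, hh2]
  have hWpar : ((W : ℕ) : ZMod 2) = 0 := by
    have h4 : ((W : ℕ) : ZMod 2) = ∑ r ∈ Finset.range d, ((F ((r:ℕ):ZMod n) : ℕ) : ZMod 2) := by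
      rw [hW_def]
      push_cast
      rfl
    rw [h4]
    calc ∑ r ∈ Finset.range d, ((F ((r:ℕ):ZMod n) : ℕ) : ZMod 2)
        = ∑ r ∈ Finset.range d, (a ((r:ℕ):ZMod n) + b ((r:ℕ):ZMod n)) :=
          Finset.sum_congr rfl fun r _ => hterm _
      _ = (∑ r ∈ Finset.range d, a ((r:ℕ):ZMod n)) + ∑ r ∈ Finset.range d, b ((r:ℕ):ZMod n) :=
          Finset.sum_add_distrib
      _ = 0 := by rw [hSa, hSb, add_zero]
  rw [hWd] at hWpar
  have : (2 : ℕ) ∣ d := (ZMod.natCast_eq_zero_iff d 2).mp hWpar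
  have : (2 : ℕ) ∣ 15 := this.trans hd15
  norm_num at this

lemma four_case (a b : ZMod 4 → ZMod 2)
    (hb : ∀ i, b i = a (i + 1) + a (i - 1))
    (ha : ∀ i, a i = b (i + 2)) : ∀ v, a v = 0 ∧ b v = 0 := by
  have hrec : ∀ i : ZMod 4, a i = a (i + 3) + a (i + 1) := by
    intro i
    rw [ha i, hb (i + 2), show i + 2 + 1 = i + 3 by ring, show i + 2 - 1 = i + 1 by ring]
  have haz : ∀ i, a i = 0 := by
    intro i
    have k0 := hrec i
    have k1 := hrec (i + 1)
    have k2 := hrec (i + 2)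
    have k3 := hrec (i + 3)
    have n1 : i + 1 + 3 = i := by rw [add_assoc]; norm_num; decide
    have n2 : i + 2 + 3 = i + 1 := by rw [add_assoc]; congr 1
    have n3 : i + 3 + 3 = i + 2 := by rw [add_assoc]; congr 1
    have n4 : i + 3 + 1 = i := by rw [add_assoc]; norm_num; decide
    rw [n1, show i + 1 + 1 = i + 2 by ring] at k1
    rw [n2, show i + 2 + 1 = i + 3 by ring] at k2
    rw [n3, n4] at k3
    generalize a i = x0 at *
    generalize a (i + 1) = x1 at *
    generalize a (i + 2) = x2 at *
    generalize a (i + 3) = x3 at *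
    revert k0 k1 k2 k3
    revert x0 x1 x2 x3
    decide
  intro v
  refine ⟨haz v, ?_⟩
  rw [hb, haz, haz, add_zero]

lemma z3 : ∀ x y z : ZMod 2, x + y + z = 0 → z = x + y := by decide
lemma z2' : ∀ x y : ZMod 2, x + y = 0 → y = x := by decide

theorem stmt12 (n : ℕ) [NeZero n] (hn : 3 ≤ n) :
    ¬ ∃ ℓ : ZMod n ⊕ ZMod n → ZMod 2, IsBZN (GP n 2) n ℓ := by
  classical
  rintro ⟨ℓ, hB⟩
  have hB' : (Finset.univ.filter (fun v => ℓ v = 0)).card = n ∧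
      (Finset.univ.filter (fun v => ℓ v = 1)).card = n ∧
      ∀ v, vertexWeight (GP n 2) ℓ v = 0 := hB
  obtain ⟨h0, h1, hw⟩ := hB'
  set a : ZMod n → ZMod 2 := fun i => ℓ (Sum.inl i) with ha_def
  set b : ZMod n → ZMod 2 := fun i => ℓ (Sum.inr i) with hb_def
  have h1' : (1 : ZMod n) ≠ 0 := by
    intro hc
    have : n ∣ 1 := by
      rw [← ZMod.natCast_eq_zero_iff 1 n]
      exact_mod_cast hc
    have := Nat.le_of_dvd one_pos this
    omega
  have h2' : (2 : ZMod n) ≠ 0 := by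
    intro hc
    have : n ∣ 2 := by
      rw [← ZMod.natCast_eq_zero_iff 2 n]
      exact_mod_cast hc
    have := Nat.le_of_dvd (by norm_num) this
    omega
  have hbr : ∀ i, b i = a (i + 1) + a (i - 1) := by
    intro i
    have h := hw (Sum.inl i)
    rw [weight_inl n h1' h2' ℓ i] at h
    exact z3 _ _ _ h
  have hcount : (∑ i : ZMod n,
      ((if a i = 1 then 1 else 0) + (if b i = 1 then 1 else 0))) = n := by
    rw [Finset.card_filter] at h1
    rw [Fintype.sum_sum_type] at h1
    rw [← Finset.sum_add_distrib] at h1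
    exact h1
  by_cases hn4 : n = 4
  · subst hn4
    have ha4 : ∀ i, a i = b (i + 2) := by
      intro i
      have h := hw (Sum.inr i)
      rw [weight_inr4 ℓ i] at h
      exact z2' _ _ h
    have hz := four_case a b hbr ha4
    have hempty : (Finset.univ.filter (fun v => ℓ v = 1)) = ∅ := by
      refine Finset.filter_eq_empty_iff.mpr ?_
      intro v _
      cases v with
      | inl i =>
        have := (hz i).1
        rw [ha_def] at this
        simp only at this
        rw [this]
        decide
      | inr i =>
        have := (hz i).2
        rw [hb_def] at this
        simp only at this
        rw [this]
        decide
    rw [hempty] at h1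
    simp at h1
  · have h4' : (4 : ZMod n) ≠ 0 := by
      intro hc
      have hdvd : n ∣ 4 := by
        rw [← ZMod.natCast_eq_zero_iff 4 n]
        exact_mod_cast hc
      have := Nat.le_of_dvd (by norm_num) hdvd
      have h3 : n = 3 := by omega
      rw [h3] at hdvd
      norm_num at hdvd
    have har : ∀ i, a i = b (i + 2) + b (i - 2) := by
      intro i
      have h := hw (Sum.inr i)
      rw [weight_inr n h2' h4' ℓ i] at h
      exact z3 _ _ _ h
    exact general_case n hn hn4 a b hbr har hcount
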